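/- If f is string submodular (prefix monotone and with the diminishing-return property), postfix monotone (f(M ⊕ N) ≥ f(N) for all M, N ∈ 𝔸*), and σ ∈ (0, 1] is such that for every a ∈ 𝔸 and M ∈ 𝔸*, f((a) ⊕ M) − f(M) ≥ (1 − σ)·(f((a)) − f(∅)), then any greedy strategy G_K satisfies f(G_K) ≥ (1/σ)·(1 − (1 − σ/K)^K)·f(O_K). -/

import Mathlib

/-- If `f` is string submodular, postfix monotone, and has total backward
curvature at most `σ ∈ (0,1]`, then any greedy strategy satisfies
`f(G_K) ≥ (1/σ)·(1 − (1 − σ/K)^K)·f(O_K)`. -/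
theorem stmt1 {α : Type*} [Nonempty α] (K : ℕ) (hK : 1 ≤ K)
    (f : List α → ℝ) (hf0 : f [] = 0) (g o : ℕ → α) (σ : ℝ)
    (hσ0 : 0 < σ) (hσ1 : σ ≤ 1)
    -- O_K is an optimal strategy of length K
    (hopt : ∀ M : List α, M.length ≤ K → f ((List.range K).map o) ≥ f M)
    -- G_K is a greedy strategy
    (hgreedy : ∀ i < K, ∀ a : α,
      f ((List.range i).map g ++ [g i]) ≥ f ((List.range i).map g ++ [a]))
    -- f is prefix monotone
    (hprefix : ∀ M N : List α, f (M ++ N) ≥ f M)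
    -- f has the diminishing-return property
    (hdim : ∀ M N : List α, M <+: N → ∀ a : α,
      f (M ++ [a]) - f M ≥ f (N ++ [a]) - f N)
    -- f is postfix monotone
    (hpostfix : ∀ M N : List α, f (M ++ N) ≥ f N)
    -- the total backward curvature of f is at most σ
    (hcurv : ∀ (a : α) (M : List α),
      f ([a] ++ M) - f M ≥ (1 - σ) * (f [a] - f [])) :
    f ((List.range K).map g) ≥
      (1 / σ) * (1 - (1 - σ / (K : ℝ)) ^ K) * f ((List.range K).map o) := by
  set O : List α := (List.range K).map o with hO
  have hKpos : (0:ℝ) < (K:ℝ) := by exact_mod_cast Nat.lt_of_lt_of_le Nat.zero_lt_one hK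
  have hKne : (K:ℝ) ≠ 0 := ne_of_gt hKpos
  -- telescoping with diminishing returns
  have tele : ∀ M N : List α,
      f (M ++ N) - f M ≤ (N.map (fun a => f (M ++ [a]) - f M)).sum := by
    intro M N
    induction N using List.reverseRecOn with
    | nil => simp
    | append_singleton N' a ih =>
      have h1 : f (M ++ [a]) - f M ≥ f ((M ++ N') ++ [a]) - f (M ++ N') :=
        hdim M (M ++ N') (List.prefix_append M N') a
      rw [← List.append_assoc]
      simp only [List.map_append, List.sum_append, List.map_cons, List.map_nil,
        List.sum_cons, List.sum_nil]
      linarith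
  -- subadditivity
  have subadd : ∀ M : List α, f M ≤ (M.map (fun a => f [a])).sum := by
    intro M
    induction M using List.reverseRecOn with
    | nil => simp [hf0]
    | append_singleton M' a ih =>
      have h1 : f ([] ++ [a]) - f [] ≥ f (M' ++ [a]) - f M' :=
        hdim [] M' List.nil_prefix a
      simp only [List.nil_append, hf0, sub_zero] at h1
      simp only [List.map_append, List.sum_append, List.map_cons, List.map_nil,
        List.sum_cons, List.sum_nil]
      linarith
  -- curvature prepending
  have curvL : ∀ M : List α,
      f (M ++ O) ≥ f O + (1 - σ) * (M.map (fun a => f [a])).sum := by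
    intro M
    induction M with
    | nil => simp
    | cons a M' ih =>
      have h1 := hcurv a (M' ++ O)
      rw [hf0, sub_zero] at h1
      have h2 : (a :: M') ++ O = [a] ++ (M' ++ O) := by simp
      rw [h2]
      simp only [List.map_cons, List.sum_cons, mul_add]
      linarith
  -- per-step inequality
  have step : ∀ i < K, f ((List.range (i+1)).map g) ≥
      (1 - σ / K) * f ((List.range i).map g) + f O / K := by
    intro i hi
    set Gi : List α := (List.range i).map g with hGi
    have hGsucc : (List.range (i+1)).map g = Gi ++ [g i] := by
      rw [List.range_succ, List.map_append]; simp [hGi]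
    have hA : f (Gi ++ O) ≤ f Gi + (K:ℝ) * (f (Gi ++ [g i]) - f Gi) := by
      have ht := tele Gi O
      have hbound : ∀ x ∈ O.map (fun a => f (Gi ++ [a]) - f Gi),
          x ≤ f (Gi ++ [g i]) - f Gi := by
        intro x hx
        simp only [List.mem_map] at hx
        obtain ⟨a, _, rfl⟩ := hx
        have := hgreedy i hi a
        linarith
      have hs := List.sum_le_card_nsmul _ _ hbound
      have hlen : (O.map (fun a => f (Gi ++ [a]) - f Gi)).length = K := by
        simp [hO]
      rw [hlen, nsmul_eq_mul] at hs
      linarith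
    have hB : f (Gi ++ O) ≥ f O + (1 - σ) * f Gi := by
      have h1 := curvL Gi
      have h2 := subadd Gi
      have hσ' : (0:ℝ) ≤ 1 - σ := by linarith
      nlinarith [mul_le_mul_of_nonneg_left h2 hσ']
    rw [hGsucc, ge_iff_le]
    rw [← mul_le_mul_iff_right₀ hKpos]
    have hexp : (K:ℝ) * ((1 - σ / K) * f Gi + f O / K) = (K - σ) * f Gi + f O := by
      field_simp
    rw [hexp]
    nlinarith
  -- f O nonneg
  have hOnn : 0 ≤ f O := by
    have := hopt [] (by simp [Nat.le_of_lt_succ, Nat.zero_le])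
    rw [hf0] at this; linarith
  have hc0 : (0:ℝ) ≤ 1 - σ / K := by
    have : σ / K ≤ 1 := by
      rw [div_le_one hKpos]
      calc σ ≤ 1 := hσ1
        _ ≤ (K:ℝ) := by exact_mod_cast hK
    linarith
  have hσK : (0:ℝ) < σ / K := div_pos hσ0 hKpos
  -- main induction
  have main : ∀ i ≤ K, (f O / K) * ((1 - (1 - σ/K)^i) / (σ/K)) ≤ f ((List.range i).map g) := by
    intro i
    induction i with
    | zero => intro _; simp [hf0]
    | succ n ih =>
      intro h
      have hn := ih (Nat.le_of_succ_le h)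
      have hs := step n h
      have key : (f O / K) * ((1 - (1 - σ/K)^(n+1)) / (σ/K))
          = (1 - σ/K) * ((f O / K) * ((1 - (1 - σ/K)^n) / (σ/K))) + f O / K := by
        rw [pow_succ]; generalize (1 - σ/K)^n = t
        field_simp
        ring
      rw [key]
      have h1 : (1 - σ/K) * ((f O / K) * ((1 - (1 - σ/K)^n) / (σ/K)))
          ≤ (1 - σ/K) * f ((List.range n).map g) :=
        mul_le_mul_of_nonneg_left hn hc0
      linarith
  have hfin := main K le_rfl
  have heq : (f O / K) * ((1 - (1 - σ/K)^K) / (σ/K))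
      = (1 / σ) * (1 - (1 - σ / (K:ℝ)) ^ K) * f O := by
    field_simp
  rw [heq] at hfin
  exact hfin
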